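/- If f : [0,1] → S¹ is a loop with f(0) = f(1) = 1 that is not null-homotopic, then there exist a, b ∈ [0,1] with a < b such that f(a) = f(b) = 1 and f((a,b)) = S¹ \ {1}. -/

import Mathlib

open Real Complex Set


lemma exp_sum' (s : Finset ℕ) (h : ℕ → ℝ) :
    Circle.exp (∑ k ∈ s, h k) = ∏ k ∈ s, Circle.exp (h k) := by
  classical
  induction s using Finset.induction_on with
  | empty => simp [Circle.exp_zero]
  | insert _ _ hx ih => rw [Finset.sum_insert hx, Finset.prod_insert hx, Circle.exp_add, ih]

lemma minlip (t a b : ℝ) : |min t a - min t b| ≤ |a - b| := by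
  have k1 : a - b ≤ |a - b| := le_abs_self _
  have k2 : b - a ≤ |a - b| := abs_sub_comm a b ▸ le_abs_self _
  have k3 : (0:ℝ) ≤ |a - b| := abs_nonneg _
  rcases le_total t a with h1 | h1 <;> rcases le_total t b with h2 | h2 <;>
    [rw [min_eq_left h1, min_eq_left h2]; rw [min_eq_left h1, min_eq_right h2];
     rw [min_eq_right h1, min_eq_left h2]; rw [min_eq_right h1, min_eq_right h2]] <;>
    (rw [abs_le]; constructor <;> linarith)

lemma lift_exists (f : Path (1 : Circle) 1) :
    ∃ g : ℝ → ℝ, Continuous g ∧ g 0 = 0 ∧ ∀ x : unitInterval, f x = Circle.exp (g x) := by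
  classical
  obtain ⟨δ, hδ, hδ2⟩ := Metric.uniformContinuous_iff.mp
    (CompactSpace.uniformContinuous_of_continuous f.continuous) 2 two_pos
  obtain ⟨N, hN⟩ := exists_nat_one_div_lt hδ
  set n : ℕ := N + 1 with hn
  have hnpos : (0:ℝ) < n := by positivity
  have hnne : (n:ℝ) ≠ 0 := ne_of_gt hnpos
  have h1n : 1 / (n:ℝ) < δ := by
    rw [hn]; push_cast; exact hN
  set P : ℝ → unitInterval := Set.projIcc 0 1 zero_le_one with hP
  set F : ℝ → Circle := fun t => f (P t) with hF
  have hFcont : Continuous F := f.continuous.comp continuous_projIcc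
  -- small steps give ratios away from -1
  have key : ∀ s t : ℝ, |s - t| ≤ 1 / n →
      (0 < ((F s / F t : Circle) : ℂ).re ∨ ((F s / F t : Circle) : ℂ).im ≠ 0) := by
    intro s t hst
    have hdist : dist (F s) (F t) < 2 := by
      apply hδ2
      calc dist (P s) (P t) ≤ 1 * dist s t := (LipschitzWith.projIcc zero_le_one).dist_le_mul s t
        _ = |s - t| := by rw [one_mul, Real.dist_eq]
        _ ≤ 1 / n := hst
        _ < δ := h1n
    by_contra h
    push_neg at h
    obtain ⟨hre, him⟩ := h
    set z : ℂ := ((F s / F t : Circle) : ℂ) with hz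
    have habs : ‖z‖ = 1 := Circle.norm_coe _
    have hzre : z = (z.re : ℂ) := Complex.ext rfl (by simpa using him)
    have : |z.re| = 1 := by
      rw [hzre] at habs; rwa [Complex.norm_real, Real.norm_eq_abs] at habs
    have hzm1 : z = -1 := by
      rw [hzre]
      rw [abs_of_nonpos hre] at this
      norm_num [show z.re = -1 by linarith]
    have hFts : (F s : ℂ) = -(F t : ℂ) := by
      have ht0 : (F t : ℂ) ≠ 0 := Circle.coe_ne_zero _
      have : ((F s : ℂ) / (F t : ℂ)) = -1 := by
        rw [← hzm1, hz]; push_cast; ring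
      field_simp at this
      linear_combination this
    have : dist (F s) (F t) = 2 := by
      change dist (F s : ℂ) (F t : ℂ) = 2; rw [Complex.dist_eq, hFts]
      have : -(F t : ℂ) - (F t : ℂ) = -(2 * (F t : ℂ)) := by ring
      rw [this, norm_neg, norm_mul]
      simp [Circle.norm_coe]
    linarith
  set g : ℝ → ℝ := fun t => ∑ k ∈ Finset.range n,
    Complex.arg ((F (min t ((k+1) / n)) / F (min t (k / n)) : Circle) : ℂ) with hg
  have hdistc : ∀ (t : ℝ) (k : ℕ), |min t (((k:ℝ)+1) / n) - min t ((k:ℝ) / n)| ≤ 1 / n := by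
    intro t k
    calc |min t (((k:ℝ)+1) / n) - min t ((k:ℝ) / n)| ≤ |((k:ℝ)+1) / n - (k:ℝ) / n| := minlip _ _ _
      _ = 1 / n := by rw [div_sub_div_same, show ((k:ℝ)+1-k)=1 by ring, _root_.abs_of_nonneg (by positivity)]
  have hgcont : Continuous g := by
    rw [hg]
    apply continuous_finset_sum
    intro k _
    have hinner : Continuous fun t : ℝ =>
        ((F (min t (((k:ℝ)+1) / n)) / F (min t ((k:ℝ) / n)) : Circle) : ℂ) :=
      continuous_subtype_val.comp
        ((hFcont.comp ((continuous_id.min continuous_const))).div'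
          (hFcont.comp ((continuous_id.min continuous_const))))
    rw [continuous_iff_continuousAt]
    intro t
    have h2 : ContinuousAt (fun t : ℝ =>
        ((F (min t (((k:ℝ)+1) / n)) / F (min t ((k:ℝ) / n)) : Circle) : ℂ)) t :=
      hinner.continuousAt
    exact ContinuousAt.comp
      (f := fun t : ℝ => ((F (min t (((k:ℝ)+1) / n)) / F (min t ((k:ℝ) / n)) : Circle) : ℂ))
      (Complex.continuousAt_arg (key _ _ (hdistc t k))) h2
  have hexp : ∀ t : ℝ, Circle.exp (g t) = F (min t ((n:ℝ) / n)) / F (min t 0) := by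
    intro t
    rw [hg, exp_sum']
    have : ∀ k ∈ Finset.range n,
        Circle.exp (Complex.arg ((F (min t (((k:ℝ)+1) / n)) / F (min t ((k:ℝ) / n)) : Circle) : ℂ))
        = (fun j : ℕ => F (min t ((j:ℝ) / n))) (k+1) / (fun j : ℕ => F (min t ((j:ℝ) / n))) k := by
      intro k _
      rw [Circle.exp_arg]
      push_cast
      ring_nf
    rw [Finset.prod_congr rfl this, Finset.prod_range_div (fun j : ℕ => F (min t ((j:ℝ) / n))) n]
    norm_num
  refine ⟨g, hgcont, ?_, ?_⟩
  · rw [hg]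
    apply Finset.sum_eq_zero
    intro k _
    have e1 : min (0:ℝ) (((k:ℝ)+1) / n) = 0 := min_eq_left (by positivity)
    have e2 : min (0:ℝ) ((k:ℝ) / n) = 0 := min_eq_left (by positivity)
    rw [e1, e2, div_self']
    simp
  · intro x
    have h1 : min (x:ℝ) ((n:ℝ)/n) = (x:ℝ) := by
      rw [div_self hnne]; exact min_eq_left x.2.2
    have h2 : min (x:ℝ) (0:ℝ) = 0 := min_eq_right x.2.1
    rw [hexp, h1, h2]
    have hF0 : F 0 = 1 := by
      have : P 0 = 0 := Set.projIcc_left zero_le_one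
      show f (P 0) = 1
      rw [this]; exact f.source
    have hFx : F (x:ℝ) = f x := congrArg f (Set.projIcc_val zero_le_one x)
    rw [hF0, hFx, div_one]

-- the image lemma
lemma exp_image (r : ℝ) : Circle.exp '' Ioo r (r + 2*π) = {Circle.exp r}ᶜ := by
  ext z
  simp only [mem_image, mem_compl_iff, mem_singleton_iff]
  constructor
  · rintro ⟨x, ⟨hx1, hx2⟩, rfl⟩ hz
    obtain ⟨m, hm⟩ := Circle.exp_eq_exp.mp hz
    have h2π : (0:ℝ) < 2*π := by positivity
    have : (0:ℝ) < m * (2*π) := by linarith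
    have : (m:ℝ) * (2*π) < 2*π := by linarith
    have hm0 : (0:ℤ) < m := by
      by_contra h
      push_neg at h
      have : (m:ℝ) ≤ 0 := by exact_mod_cast h
      nlinarith
    have hm1 : (m:ℤ) < 1 := by
      by_contra h
      push_neg at h
      have : (1:ℝ) ≤ (m:ℝ) := by exact_mod_cast h
      nlinarith
    omega
  · intro hz
    set w : Circle := z / Circle.exp r with hw
    have hwne : w ≠ 1 := by
      intro h
      apply hz
      rwa [hw, div_eq_one] at h
    have harg : Circle.exp (Complex.arg ↑w) = w := Circle.exp_arg w
    have hargne : Complex.arg ↑w ≠ 0 := by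
      intro h
      rw [h, Circle.exp_zero] at harg
      exact hwne harg.symm
    have hlt : Complex.arg ↑w ≤ π := Complex.arg_le_pi _
    have hgt : -π < Complex.arg ↑w := Complex.neg_pi_lt_arg _
    have hπ : (0:ℝ) < π := Real.pi_pos
    rcases lt_or_gt_of_ne hargne with hneg | hpos
    · refine ⟨r + Complex.arg ↑w + 2*π, ⟨by linarith, by linarith⟩, ?_⟩
      rw [Circle.exp_add_two_pi, Circle.exp_add, harg, hw]
      rw [mul_comm, div_mul_cancel]
    · refine ⟨r + Complex.arg ↑w, ⟨by linarith, by linarith⟩, ?_⟩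
      rw [Circle.exp_add, harg, hw]
      rw [mul_comm, div_mul_cancel]


lemma core (g : ℝ → ℝ) (hg : Continuous g) (h0 : g 0 = 0) (c : ℝ) (hc : 0 < c)
    (u : ℝ) (hu0 : 0 ≤ u) (hu1 : u ≤ 1) (huc : g u = c) :
    ∃ a b : ℝ, 0 ≤ a ∧ a < b ∧ b ≤ 1 ∧ g a = 0 ∧ g b = c ∧ g '' Ioo a b = Ioo 0 c := by
  classical
  set S : Set ℝ := Icc 0 u ∩ g ⁻¹' {c} with hS
  have hSclosed : IsClosed S := isClosed_Icc.inter (isClosed_singleton.preimage hg)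
  have hSne : S.Nonempty := ⟨u, ⟨hu0, le_refl u⟩, huc⟩
  have hSbdd : BddBelow S := ⟨0, fun x hx => hx.1.1⟩
  set b := sInf S with hb
  have hbS : b ∈ S := hSclosed.csInf_mem hSne hSbdd
  have hgb : g b = c := hbS.2
  have hb0 : 0 ≤ b := hbS.1.1
  have hbu : b ≤ u := hbS.1.2
  set A : Set ℝ := Icc 0 b ∩ g ⁻¹' {0} with hA
  have hAclosed : IsClosed A := isClosed_Icc.inter (isClosed_singleton.preimage hg)
  have hAne : A.Nonempty := ⟨0, ⟨le_refl 0, hb0⟩, h0⟩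
  have hAbdd : BddAbove A := ⟨b, fun x hx => hx.1.2⟩
  set a := sSup A with ha
  have haA : a ∈ A := hAclosed.csSup_mem hAne hAbdd
  have hga : g a = 0 := haA.2
  have ha0 : 0 ≤ a := haA.1.1
  have hab : a ≤ b := haA.1.2
  have hanb : a ≠ b := fun h => by rw [h, hgb] at hga; linarith
  have hab' : a < b := lt_of_le_of_ne hab hanb
  -- no zero of g in (a, b]
  have hnz : ∀ t, a < t → t ≤ b → g t ≠ 0 := by
    intro t hat htb h
    exact absurd (le_csSup hAbdd ⟨⟨le_trans ha0 hat.le, htb⟩, h⟩) (not_le.mpr hat)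
  -- no c-value of g in [a, b)
  have hnc : ∀ t, a ≤ t → t < b → g t ≠ c := by
    intro t hat htb h
    exact absurd (csInf_le hSbdd ⟨⟨le_trans ha0 hat, le_trans htb.le hbu⟩, h⟩) (not_le.mpr htb)
  refine ⟨a, b, ha0, hab', le_trans hbu hu1, hga, hgb, ?_⟩
  apply Subset.antisymm
  · rintro y ⟨t, ⟨hat, htb⟩, rfl⟩
    constructor
    · by_contra h
      push_neg at h
      have hlt : g t < 0 := lt_of_le_of_ne h (hnz t hat htb.le)
      have : (0:ℝ) ∈ Icc (g t) (g b) := ⟨hlt.le, by rw [hgb]; exact hc.le⟩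
      obtain ⟨s, ⟨hts, hsb⟩, hgs⟩ := intermediate_value_Icc htb.le (hg.continuousOn) this
      exact hnz s (lt_of_lt_of_le hat hts) hsb hgs
    · by_contra h
      push_neg at h
      have hlt : c < g t := lt_of_le_of_ne h (fun hh => hnc t hat.le htb hh.symm)
      have : c ∈ Icc (g a) (g t) := ⟨by rw [hga]; exact hc.le, hlt.le⟩
      obtain ⟨s, ⟨has, hst⟩, hgs⟩ := intermediate_value_Icc hat.le (hg.continuousOn) this
      exact hnc s has (lt_of_le_of_lt hst htb) hgs
  · rintro y ⟨hy0, hyc⟩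
    have : y ∈ Icc (g a) (g b) := ⟨by rw [hga]; exact hy0.le, by rw [hgb]; exact hyc.le⟩
    obtain ⟨s, ⟨has, hsb⟩, hgs⟩ := intermediate_value_Icc hab (hg.continuousOn) this
    refine ⟨s, ⟨?_, ?_⟩, hgs⟩
    · rcases eq_or_lt_of_le has with rfl | h
      · rw [hga] at hgs; exact absurd hgs.symm (ne_of_gt hy0)
      · exact h
    · rcases eq_or_lt_of_le hsb with rfl | h
      · rw [hgb] at hgs; exact absurd hgs (ne_of_gt hyc)
      · exact h



lemma final_image (f : Path (1:Circle) 1) (g : ℝ → ℝ)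
    (hfg : ∀ x : unitInterval, f x = Circle.exp (g x))
    (a b : ℝ) (ha0 : 0 ≤ a) (hab : a < b) (hb1 : b ≤ 1) (r : ℝ)
    (him : g '' Ioo a b = Ioo r (r + 2*π)) (hr : Circle.exp r = 1) :
    ⇑f '' Set.Ioo (⟨a, ha0, hab.le.trans hb1⟩ : unitInterval) ⟨b, ha0.trans hab.le, hb1⟩
      = {(1:Circle)}ᶜ := by
  ext z
  simp only [mem_image, mem_compl_iff, mem_singleton_iff]
  constructor
  · rintro ⟨x, ⟨hx1, hx2⟩, rfl⟩
    have hx' : (x:ℝ) ∈ Ioo a b := ⟨Subtype.coe_lt_coe.mpr hx1, Subtype.coe_lt_coe.mpr hx2⟩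
    have hmem : g ↑x ∈ Ioo r (r + 2*π) := him ▸ mem_image_of_mem g hx'
    have : Circle.exp (g ↑x) ∈ ({Circle.exp r}ᶜ : Set Circle) := by
      rw [← exp_image r]
      exact ⟨g ↑x, hmem, rfl⟩
    rw [hfg x]
    rw [hr] at this
    exact this
  · intro hz
    have : z ∈ Circle.exp '' Ioo r (r + 2*π) := by
      rw [exp_image, hr]
      exact hz
    obtain ⟨y, hy, rfl⟩ := this
    obtain ⟨x0, hx0, hgx0⟩ : y ∈ g '' Ioo a b := him ▸ hy
    refine ⟨⟨x0, ha0.trans hx0.1.le, hx0.2.le.trans hb1⟩, ⟨?_, ?_⟩, ?_⟩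
    · exact Subtype.mk_lt_mk.mpr hx0.1
    · exact Subtype.mk_lt_mk.mpr hx0.2
    · rw [hfg, hgx0]


/-- If `f : [0,1] → S¹` is a loop based at `1` that is not null-homotopic, then there are
`a < b` in `[0,1]` with `f a = f b = 1` and `f((a,b)) = S¹ \ {1}`. -/
theorem stmt10 (f : Path (1 : Circle) 1)
    (hf : ¬ f.Homotopic (Path.refl 1)) :
    ∃ a b : unitInterval, a < b ∧ f a = 1 ∧ f b = 1 ∧
      (⇑f) '' Set.Ioo a b = {(1 : Circle)}ᶜ := by
  obtain ⟨g, hgc, hg0, hfg⟩ := lift_exists f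
  have hπ : (0:ℝ) < π := Real.pi_pos
  have hcoe1 : ((1 : unitInterval) : ℝ) = 1 := rfl
  have hg1 : Circle.exp (g 1) = 1 := by
    have h := hfg 1
    rw [f.target] at h
    rw [← hcoe1]
    exact h.symm
  obtain ⟨m, hm⟩ : ∃ m : ℤ, g 1 = 0 + m * (2*π) :=
    Circle.exp_eq_exp.mp (by rw [hg1, Circle.exp_zero])
  rw [zero_add] at hm
  have hmne : m ≠ 0 := by
    rintro rfl
    apply hf
    push_cast at hm
    rw [zero_mul] at hm
    refine ⟨{ toFun := fun p => Circle.exp ((1 - (p.1 : ℝ)) * g p.2),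
              continuous_toFun := by fun_prop,
              map_zero_left := ?_, map_one_left := ?_, prop' := ?_ }⟩
    · intro x; simp [hfg x]
    · intro x; simp
    · intro t x hx
      simp only [Set.mem_insert_iff, Set.mem_singleton_iff] at hx
      rcases hx with rfl | rfl
      · simp [hfg, hg0, show ((0:unitInterval):ℝ) = 0 from rfl]
      · simp [hfg, hm, show ((1:unitInterval):ℝ) = 1 from rfl]
  rcases hmne.lt_or_gt with hneg | hpos
  · -- winding number negative : use -g
    have hm1 : (m:ℝ) ≤ -1 := by exact_mod_cast (show m ≤ -1 by omega)
    have hgle : g 1 ≤ -(2*π) := by rw [hm]; nlinarith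
    have hmem : -(2*π) ∈ Icc (g 1) (g 0) := ⟨hgle, by rw [hg0]; linarith⟩
    obtain ⟨u, hu, hgu⟩ := intermediate_value_Icc' zero_le_one hgc.continuousOn hmem
    obtain ⟨a, b, ha0, hab, hb1, hga, hgb, him⟩ :=
      core (fun t => -g t) hgc.neg (by simp [hg0]) (2*π) (by positivity)
        u hu.1 hu.2 (by simp [hgu])
    have hga' : g a = 0 := by simpa using hga
    have him' : g '' Ioo a b = Ioo (-(2*π)) (-(2*π) + 2*π) := by
      have : Ioo (-(2*π)) (-(2*π) + 2*π) = Ioo (-(2*π)) 0 := by norm_num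
      rw [this]
      ext y
      constructor
      · rintro ⟨x, hx, rfl⟩
        have : -g x ∈ Ioo 0 (2*π) := him ▸ ⟨x, hx, rfl⟩
        exact ⟨by linarith [this.2], by linarith [this.1]⟩
      · rintro ⟨hy1, hy2⟩
        have : -y ∈ Ioo 0 (2*π) := ⟨by linarith, by linarith⟩
        obtain ⟨x, hx, hgx⟩ : -y ∈ (fun t => -g t) '' Ioo a b := him ▸ this
        exact ⟨x, hx, by dsimp at hgx; linarith⟩
    have hexpr : Circle.exp (-(2*π)) = 1 := by
      rw [show -(2*π) = 0 - 2*π by ring, Circle.exp_sub_two_pi, Circle.exp_zero]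
    refine ⟨⟨a, ha0, hab.le.trans hb1⟩, ⟨b, ha0.trans hab.le, hb1⟩,
      Subtype.mk_lt_mk.mpr hab, ?_, ?_, ?_⟩
    · rw [hfg]; show Circle.exp (g a) = 1; rw [hga', Circle.exp_zero]
    · rw [hfg]; show Circle.exp (g b) = 1
      have h : -g b = 2*π := hgb
      rw [show g b = -(2*π) by linarith, hexpr]
    · exact final_image f g hfg a b ha0 hab hb1 (-(2*π)) him' hexpr
  · -- winding number positive
    have hm1 : (1:ℝ) ≤ (m:ℝ) := by exact_mod_cast hpos
    have hgge : 2*π ≤ g 1 := by rw [hm]; nlinarith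
    have hmem : 2*π ∈ Icc (g 0) (g 1) := ⟨by rw [hg0]; positivity, hgge⟩
    obtain ⟨u, hu, hgu⟩ := intermediate_value_Icc zero_le_one hgc.continuousOn hmem
    obtain ⟨a, b, ha0, hab, hb1, hga, hgb, him⟩ :=
      core g hgc hg0 (2*π) (by positivity) u hu.1 hu.2 hgu
    have him' : g '' Ioo a b = Ioo 0 (0 + 2*π) := by rw [zero_add]; exact him
    refine ⟨⟨a, ha0, hab.le.trans hb1⟩, ⟨b, ha0.trans hab.le, hb1⟩,
      Subtype.mk_lt_mk.mpr hab, ?_, ?_, ?_⟩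
    · rw [hfg]; show Circle.exp (g a) = 1; rw [hga, Circle.exp_zero]
    · rw [hfg]; show Circle.exp (g b) = 1; rw [hgb, Circle.exp_two_pi]
    · exact final_image f g hfg a b ha0 hab hb1 0 him' Circle.exp_zero
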